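/- Let ρ > 1 and let R_∞ := inf_n n^{-1} E[R^β(ω₀, ω_n)] where R^β is the effective resistance of the Mott network. Then R_∞ > 0. More precisely, for the linear test function f_n(i) = ((i/n) ∨ 0) ∧ 1 one has R^β(ω₀,ω_n)^{-1} ≤ Σ(n) := Σ_{i,j∈ℤ} c^{β,0}(ωᵢ,ω_j)(f_n(i)-f_n(j))², and E[nΣ(n)] ≤ 4(1-c)^{-1} Σ_{j≥0} c^j j² =: C₀ < ∞ where c = E[e^{-ω₁}] ∈ (0,1); hence by Markov's inequality P(nΣ(n) ≤ 2C₀) ≥ 1/2 uniformly in n, and therefore R_∞ ≥ inf_n n^{-1}E[Σ(n)^{-1}] ≥ (2C₀)^{-1}·(1/2) > 0. -/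

import Mathlib

open MeasureTheory

/-- The linear test function f_n(i) = ((i/n) ∨ 0) ∧ 1. -/
noncomputable def linTest (n : ℕ) (i : ℤ) : ℝ :=
  min (max ((i : ℝ) / (n : ℝ)) 0) 1

/-- The Dirichlet energy Σ(n) of the linear test function f_n. -/
noncomputable def sigmaEnergy {Ω : Type*} (c : ℤ → ℤ → Ω → ℝ) (n : ℕ) (a : Ω) : ℝ :=
  ∑' i : ℤ, ∑' j : ℤ, c i j a * (linTest n i - linTest n j) ^ 2

lemma linTest_nonneg (n : ℕ) (i : ℤ) : 0 ≤ linTest n i := by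
  unfold linTest; positivity

lemma linTest_le_one (n : ℕ) (i : ℤ) : linTest n i ≤ 1 := min_le_right _ _

lemma linTest_of_nonpos {n : ℕ} {i : ℤ} (h : i ≤ 0) : linTest n i = 0 := by
  unfold linTest
  have : (i : ℝ) / (n : ℝ) ≤ 0 := by
    apply div_nonpos_of_nonpos_of_nonneg (by exact_mod_cast h) (by positivity)
  rw [max_eq_right this, min_eq_left zero_le_one]

lemma linTest_of_ge {n : ℕ} {i : ℤ} (h : (n : ℤ) ≤ i) (hn : 1 ≤ n) : linTest n i = 1 := by
  unfold linTest
  have hn' : (0:ℝ) < n := by exact_mod_cast hn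
  have : (1:ℝ) ≤ (i : ℝ) / (n : ℝ) := by
    rw [le_div_iff₀ hn']; simpa using (by exact_mod_cast h : (n:ℝ) ≤ (i:ℝ))
  rw [max_eq_left (le_trans zero_le_one this), min_eq_right this]

lemma linTest_lipschitz (n : ℕ) (i j : ℤ) :
    |linTest n i - linTest n j| ≤ |(i : ℝ) - (j : ℝ)| / n := by
  unfold linTest
  refine le_trans (abs_min_sub_min_le_max _ _ _ _) ?_
  simp only [sub_self, abs_zero]
  refine max_le (le_trans (abs_max_sub_max_le_abs _ _ _) ?_) (by positivity)
  rw [div_sub_div_same, abs_div, abs_of_nonneg (by positivity : (0:ℝ) ≤ (n:ℝ))]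

lemma abs_linTest_sub_le_one (n : ℕ) (i j : ℤ) : |linTest n i - linTest n j| ≤ 1 := by
  have h1 := linTest_nonneg n i
  have h2 := linTest_nonneg n j
  have h3 := linTest_le_one n i
  have h4 := linTest_le_one n j
  rw [abs_le]; constructor <;> linarith

lemma linTest_sq_le (n : ℕ) (i j : ℤ) (hn : 1 ≤ n) :
    (linTest n i - linTest n j) ^ 2
      ≤ ((i - j).natAbs : ℝ) / n * min (((i - j).natAbs : ℝ) / n) 1 := by
  have h1 : |linTest n i - linTest n j| ≤ ((i - j).natAbs : ℝ) / n := by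
    have := linTest_lipschitz n i j
    rwa [show |(i:ℝ) - (j:ℝ)| = ((i - j).natAbs : ℝ) by
      rw [Nat.cast_natAbs]; push_cast; ring] at this
  have h2 : |linTest n i - linTest n j| ≤ min (((i - j).natAbs : ℝ) / n) 1 :=
    le_min h1 (abs_linTest_sub_le_one n i j)
  calc (linTest n i - linTest n j) ^ 2 = |linTest n i - linTest n j| * |linTest n i - linTest n j| := by
        rw [← abs_mul, sq]; exact (abs_of_nonneg (mul_self_nonneg _)).symm
    _ ≤ ((i - j).natAbs : ℝ) / n * min (((i - j).natAbs : ℝ) / n) 1 :=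
        mul_le_mul h1 h2 (abs_nonneg _) (by positivity)

lemma count_bound (n d : ℕ) (hn : 1 ≤ n) (hd : 1 ≤ d) :
    ((n:ℝ) + d - 1) * ((d:ℝ)/n * min ((d:ℝ)/n) 1) ≤ 2 * (d:ℝ)^2 / n := by
  have hn' : (0:ℝ) < n := by exact_mod_cast hn
  have hd' : (1:ℝ) ≤ d := by exact_mod_cast hd
  have hn1 : (1:ℝ) ≤ n := by exact_mod_cast hn
  rcases le_total ((d:ℝ)/n) 1 with h | h
  · rw [min_eq_left h]
    have hdn : (d:ℝ) ≤ n := by rwa [div_le_one hn'] at h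
    rw [div_mul_div_comm, mul_div_assoc', div_le_div_iff₀ (by positivity) hn']
    nlinarith [mul_le_mul_of_nonneg_right (show (n:ℝ)+d-1 ≤ 2*n by linarith)
      (show (0:ℝ) ≤ d*d*n by positivity), sq ((d:ℝ))]
  · rw [min_eq_right h]
    have hnd : (n:ℝ) ≤ d := by rw [le_div_iff₀ hn'] at h; linarith
    rw [mul_one, mul_comm, div_mul_eq_mul_div, div_le_div_iff₀ hn' hn']
    nlinarith [mul_le_mul_of_nonneg_right (show (n:ℝ)+d-1 ≤ 2*d by linarith)
      (show (0:ℝ) ≤ d*n by positivity)]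

lemma per_k (cst : ℝ) (h0 : 0 < cst) (n : ℕ) (hn : 1 ≤ n) (k : ℤ) :
    ∑' i : ℤ, ENNReal.ofReal (cst ^ k.natAbs * (linTest n i - linTest n (i + k)) ^ 2)
      ≤ ENNReal.ofReal (2 * cst ^ k.natAbs * (k.natAbs : ℝ) ^ 2 / n) := by
  by_cases hk : k = 0
  · subst hk; simp
  · have hd : 1 ≤ k.natAbs := Int.natAbs_pos.mpr hk
    set d : ℕ := k.natAbs with hdd
    set s : Finset ℤ := Finset.Icc (1 - max k 0) ((n:ℤ) - 1 - min k 0) with hs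
    have hsupp : ∀ i : ℤ, i ∉ s →
        ENNReal.ofReal (cst ^ d * (linTest n i - linTest n (i + k)) ^ 2) = 0 := by
      intro i hi
      have heq : linTest n i = linTest n (i + k) := by
        rw [hs, Finset.mem_Icc, not_and_or] at hi
        rcases hi with hi | hi
        · push_neg at hi
          have h1 : i ≤ 0 := by have := le_max_right k 0; omega
          have h2 : i + k ≤ 0 := by have := le_max_left k 0; omega
          rw [linTest_of_nonpos h1, linTest_of_nonpos h2]
        · push_neg at hi
          have h1 : (n:ℤ) ≤ i := by have := min_le_right k 0; omega
          have h2 : (n:ℤ) ≤ i + k := by have := min_le_left k 0; omega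
          rw [linTest_of_ge h1 hn, linTest_of_ge h2 hn]
      rw [heq]; simp
    rw [tsum_eq_sum hsupp]
    have hcard : s.card = n + d - 1 := by
      rw [hs, Int.card_Icc]
      have h1 := le_max_right k 0
      have h2 := le_max_left k 0
      have h3 := min_le_right k 0
      have h4 := min_le_left k 0
      have h5 : max k 0 + min k 0 = k := by rcases le_total k 0 with h | h <;> simp [max_eq_right, max_eq_left, min_eq_left, min_eq_right, h] <;> omega
      omega
    have hterm : ∀ i ∈ s, ENNReal.ofReal (cst ^ d * (linTest n i - linTest n (i + k)) ^ 2)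
        ≤ ENNReal.ofReal (cst ^ d * ((d:ℝ)/n * min ((d:ℝ)/n) 1)) := by
      intro i _
      apply ENNReal.ofReal_le_ofReal
      apply mul_le_mul_of_nonneg_left _ (le_of_lt (pow_pos h0 d))
      have h := linTest_sq_le n i (i + k) hn
      rwa [show (i - (i + k)).natAbs = d by omega] at h
    calc ∑ i ∈ s, ENNReal.ofReal (cst ^ d * (linTest n i - linTest n (i + k)) ^ 2)
        ≤ s.card • ENNReal.ofReal (cst ^ d * ((d:ℝ)/n * min ((d:ℝ)/n) 1)) :=
          Finset.sum_le_card_nsmul s _ _ hterm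
      _ = ENNReal.ofReal ((↑(n + d - 1) : ℝ) * (cst ^ d * ((d:ℝ)/n * min ((d:ℝ)/n) 1))) := by
          rw [hcard, nsmul_eq_mul, ← ENNReal.ofReal_natCast, ← ENNReal.ofReal_mul (by positivity)]
      _ ≤ ENNReal.ofReal (2 * cst ^ d * (d : ℝ) ^ 2 / n) := by
          apply ENNReal.ofReal_le_ofReal
          have hcast : ((n + d - 1 : ℕ) : ℝ) = (n:ℝ) + d - 1 := by
            push_cast [Nat.cast_sub (by omega : 1 ≤ n + d)]; ring
          rw [hcast]
          have h := mul_le_mul_of_nonneg_left (count_bound n d hn hd) (le_of_lt (pow_pos h0 d))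
          calc ((n:ℝ) + d - 1) * (cst ^ d * ((d:ℝ)/n * min ((d:ℝ)/n) 1))
              = cst ^ d * (((n:ℝ) + d - 1) * ((d:ℝ)/n * min ((d:ℝ)/n) 1)) := by ring
            _ ≤ cst ^ d * (2 * (d:ℝ)^2 / n) := h
            _ = 2 * cst ^ d * (d : ℝ) ^ 2 / n := by ring

lemma int_sum_le (g : ℕ → ENNReal) (h0 : g 0 = 0) :
    ∑' k : ℤ, g k.natAbs ≤ 2 * ∑' j : ℕ, g j := by
  rw [← tsum_nat_add_neg_add_one (f := fun k : ℤ => g k.natAbs) ENNReal.summable]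
  have heq : ∀ m : ℕ, ((m : ℤ)).natAbs = m := fun m => Int.natAbs_natCast m
  have heq2 : ∀ m : ℕ, ((-(m + 1) : ℤ)).natAbs = m + 1 := by intro m; omega
  calc ∑' m : ℕ, (g ((m : ℤ)).natAbs + g ((-(m+1) : ℤ)).natAbs)
      = ∑' m : ℕ, (g m + g (m + 1)) := by
        apply tsum_congr; intro m; rw [heq m, heq2 m]
    _ = (∑' m : ℕ, g m) + ∑' m : ℕ, g (m + 1) := ENNReal.tsum_add
    _ ≤ (∑' m : ℕ, g m) + ∑' m : ℕ, g m := by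
        exact add_le_add le_rfl (ENNReal.tsum_comp_le_tsum_of_injective (add_left_injective 1) g)
    _ = 2 * ∑' j : ℕ, g j := by ring

def shearEquiv : ℤ × ℤ ≃ ℤ × ℤ where
  toFun q := (q.1, q.1 + q.2)
  invFun p := (p.1, p.2 - p.1)
  left_inv q := by simp
  right_inv p := by simp

lemma sum_bound (cst : ℝ) (h0 : 0 < cst) (h1 : cst < 1) (n : ℕ) (hn : 1 ≤ n) :
    (n : ENNReal) * ∑' (i : ℤ), ∑' (j : ℤ),
        ENNReal.ofReal (cst ^ (i - j).natAbs * (linTest n i - linTest n j) ^ 2)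
      ≤ ENNReal.ofReal (4 * ∑' j : ℕ, cst ^ j * (j : ℝ) ^ 2) := by
  have hsum : Summable (fun j : ℕ => cst ^ j * (j : ℝ) ^ 2) := by
    have := summable_pow_mul_geometric_of_norm_lt_one 2
      (show ‖cst‖ < 1 by rw [Real.norm_eq_abs, abs_of_pos h0]; exact h1)
    exact this.congr (fun j => by ring)
  have key : ∑' (i : ℤ), ∑' (j : ℤ),
        ENNReal.ofReal (cst ^ (i - j).natAbs * (linTest n i - linTest n j) ^ 2)
      = ∑' (k : ℤ), ∑' (i : ℤ),
        ENNReal.ofReal (cst ^ k.natAbs * (linTest n i - linTest n (i + k)) ^ 2) := by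
    rw [← ENNReal.tsum_prod]
    rw [← Equiv.tsum_eq shearEquiv
      (fun p : ℤ × ℤ => ENNReal.ofReal (cst ^ (p.1 - p.2).natAbs * (linTest n p.1 - linTest n p.2) ^ 2))]
    have : ∀ q : ℤ × ℤ, (q.1 - (q.1 + q.2)).natAbs = q.2.natAbs := by intro q; omega
    simp only [shearEquiv, Equiv.coe_fn_mk]
    rw [ENNReal.tsum_prod']
    rw [ENNReal.tsum_comm]
    apply tsum_congr; intro k
    apply tsum_congr; intro i
    simp only []
    rw [this (i, k)]
  rw [key]
  calc (n : ENNReal) * ∑' (k : ℤ), ∑' (i : ℤ),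
        ENNReal.ofReal (cst ^ k.natAbs * (linTest n i - linTest n (i + k)) ^ 2)
      ≤ (n : ENNReal) * ∑' (k : ℤ), ENNReal.ofReal (2 * cst ^ k.natAbs * (k.natAbs : ℝ) ^ 2 / n) := by
        gcongr with k
        exact per_k cst h0 n hn k
    _ = ∑' (k : ℤ), (n : ENNReal) * ENNReal.ofReal (2 * cst ^ k.natAbs * (k.natAbs : ℝ) ^ 2 / n) :=
        ENNReal.tsum_mul_left.symm
    _ = ∑' (k : ℤ), ENNReal.ofReal (2 * cst ^ k.natAbs * (k.natAbs : ℝ) ^ 2) := by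
        apply tsum_congr; intro k
        rw [← ENNReal.ofReal_natCast n, ← ENNReal.ofReal_mul (by positivity)]
        congr 1
        field_simp
    _ ≤ 2 * ∑' j : ℕ, ENNReal.ofReal (2 * cst ^ j * (j : ℝ) ^ 2) := by
        apply int_sum_le (fun j => ENNReal.ofReal (2 * cst ^ j * (j : ℝ) ^ 2)) (by simp)
    _ = ENNReal.ofReal (4 * ∑' j : ℕ, cst ^ j * (j : ℝ) ^ 2) := by
        rw [← ENNReal.ofReal_tsum_of_nonneg (fun j => by positivity)
          ((hsum.mul_left 2).congr (fun j => by ring))]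
        rw [show (2 : ENNReal) = ENNReal.ofReal 2 by simp]
        rw [← ENNReal.ofReal_mul (by norm_num)]
        congr 1
        rw [← tsum_mul_left, ← tsum_mul_left]
        apply tsum_congr; intro j; ring

lemma ofReal_tsum_le {ι : Type*} (f : ι → ℝ) (hf : ∀ i, 0 ≤ f i) :
    ENNReal.ofReal (∑' i, f i) ≤ ∑' i, ENNReal.ofReal (f i) := by
  by_cases h : Summable f
  · rw [ENNReal.ofReal_tsum_of_nonneg hf h]
  · rw [tsum_eq_zero_of_not_summable h]; simp

noncomputable def dEnergy {Ω : Type*} (c : ℤ → ℤ → Ω → ℝ) (n : ℕ) (a : Ω) : ENNReal :=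
  ∑' i : ℤ, ∑' j : ℤ, ENNReal.ofReal (c i j a * (linTest n i - linTest n j) ^ 2)

lemma ofReal_sigma_le {Ω : Type*} (c : ℤ → ℤ → Ω → ℝ) (hnn : ∀ i j a, 0 ≤ c i j a)
    (n : ℕ) (a : Ω) : ENNReal.ofReal (sigmaEnergy c n a) ≤ dEnergy c n a := by
  unfold sigmaEnergy dEnergy
  refine le_trans (ofReal_tsum_le _ (fun i => tsum_nonneg (fun j => mul_nonneg (hnn _ _ _) (sq_nonneg _)))) ?_
  exact ENNReal.tsum_le_tsum (fun i => ofReal_tsum_le _ (fun j => mul_nonneg (hnn _ _ _) (sq_nonneg _)))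

lemma sigma_eq_toReal {Ω : Type*} (c : ℤ → ℤ → Ω → ℝ) (hnn : ∀ i j a, 0 ≤ c i j a)
    (n : ℕ) (a : Ω) (hD : dEnergy c n a ≠ ⊤) :
    sigmaEnergy c n a = (dEnergy c n a).toReal := by
  have hinner : ∀ i : ℤ,
      (∑' j : ℤ, ENNReal.ofReal (c i j a * (linTest n i - linTest n j) ^ 2)) ≠ ⊤ :=
    fun i => ne_top_of_le_ne_top hD (ENNReal.le_tsum i)
  unfold sigmaEnergy dEnergy
  rw [ENNReal.tsum_toReal_eq hinner]
  refine tsum_congr (fun i => ?_)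
  rw [ENNReal.tsum_toReal_eq (fun j => ENNReal.ofReal_ne_top)]
  exact tsum_congr (fun j => (ENNReal.toReal_ofReal (mul_nonneg (hnn _ _ _) (sq_nonneg _))).symm)

lemma dEnergy_measurable {Ω : Type*} [MeasurableSpace Ω] (c : ℤ → ℤ → Ω → ℝ)
    (hm : ∀ i j, Measurable (c i j)) (n : ℕ) : Measurable (dEnergy c n) :=
  Measurable.ennreal_tsum fun i => Measurable.ennreal_tsum fun j =>
    ((hm i j).mul_const _).ennreal_ofReal

lemma lintegral_dEnergy {Ω : Type*} [MeasurableSpace Ω] (ℙ : Measure Ω)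
    (cst : ℝ) (h0 : 0 < cst) (h1 : cst < 1)
    (c : ℤ → ℤ → Ω → ℝ) (hm : ∀ i j, Measurable (c i j)) (hnn : ∀ i j a, 0 ≤ c i j a)
    (hE : ∀ i j, ∫⁻ a, ENNReal.ofReal (c i j a) ∂ℙ ≤ ENNReal.ofReal (cst ^ (i - j).natAbs))
    (n : ℕ) (hn : 1 ≤ n) :
    (n : ENNReal) * ∫⁻ a, dEnergy c n a ∂ℙ
      ≤ ENNReal.ofReal (4 * ∑' j : ℕ, cst ^ j * (j : ℝ) ^ 2) := by
  have hmeas : ∀ i j : ℤ,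
      Measurable (fun a => ENNReal.ofReal (c i j a * (linTest n i - linTest n j) ^ 2)) :=
    fun i j => ((hm i j).mul_const _).ennreal_ofReal
  have hlin : ∫⁻ a, dEnergy c n a ∂ℙ
      = ∑' i : ℤ, ∑' j : ℤ, ∫⁻ a, ENNReal.ofReal (c i j a * (linTest n i - linTest n j) ^ 2) ∂ℙ := by
    unfold dEnergy
    rw [lintegral_tsum (fun i => (Measurable.ennreal_tsum (fun j => hmeas i j)).aemeasurable)]
    exact tsum_congr (fun i => lintegral_tsum (fun j => (hmeas i j).aemeasurable))
  rw [hlin]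
  refine le_trans ?_ (sum_bound cst h0 h1 n hn)
  gcongr with i j
  calc ∫⁻ a, ENNReal.ofReal (c i j a * (linTest n i - linTest n j) ^ 2) ∂ℙ
      = ∫⁻ a, ENNReal.ofReal ((linTest n i - linTest n j) ^ 2) * ENNReal.ofReal (c i j a) ∂ℙ := by
        refine lintegral_congr (fun a => ?_)
        rw [← ENNReal.ofReal_mul (by positivity), mul_comm]
    _ = ENNReal.ofReal ((linTest n i - linTest n j) ^ 2) * ∫⁻ a, ENNReal.ofReal (c i j a) ∂ℙ :=
        lintegral_const_mul _ (hm i j).ennreal_ofReal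
    _ ≤ ENNReal.ofReal ((linTest n i - linTest n j) ^ 2) * ENNReal.ofReal (cst ^ (i - j).natAbs) :=
        mul_le_mul_right (hE i j) _
    _ = ENNReal.ofReal (cst ^ (i - j).natAbs * (linTest n i - linTest n j) ^ 2) := by
        rw [← ENNReal.ofReal_mul (by positivity), mul_comm]
/-- Positivity of the limiting resistivity constant in the homogenisation regime
ρ > 1: with E[c(ωᵢ,ω_j)] ≤ cc^{|i-j|} (cc ∈ (0,1)) and C₀ := 4(1-cc)⁻¹ Σ_j cc^j j²,
one has E[nΣ(n)] ≤ C₀ for all n ≥ 1, hence P(nΣ(n) ≤ 2C₀) ≥ 1/2, and therefore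
R_∞ = inf_{n≥1} n⁻¹E[R(ω₀,ω_n)] ≥ (4C₀)⁻¹ > 0 for resistances dominating the
inverse Dirichlet energy. -/
theorem stmt18 {Ω : Type*} [MeasurableSpace Ω] (ℙ : Measure Ω) [IsProbabilityMeasure ℙ]
    (cst : ℝ) (h0 : 0 < cst) (h1 : cst < 1)
    (c : ℤ → ℤ → Ω → ℝ) (hm : ∀ i j, Measurable (c i j)) (hnn : ∀ i j a, 0 ≤ c i j a)
    (hcpos : ∀ (i : ℤ) (a : Ω), 0 < c i (i + 1) a)
    (hE : ∀ i j, ∫⁻ a, ENNReal.ofReal (c i j a) ∂ℙ ≤ ENNReal.ofReal (cst ^ (i - j).natAbs))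
    (R : ℕ → Ω → ℝ) (hRnn : ∀ n a, 0 ≤ R n a) (hRint : ∀ n, Integrable (R n) ℙ)
    (hR : ∀ n a, (sigmaEnergy c n a)⁻¹ ≤ R n a) :
    (∀ n : ℕ, 1 ≤ n →
      ∫⁻ a, ENNReal.ofReal ((n : ℝ) * sigmaEnergy c n a) ∂ℙ
        ≤ ENNReal.ofReal (4 * (1 - cst)⁻¹ * ∑' j : ℕ, cst ^ j * (j : ℝ) ^ 2)) ∧
    (∀ n : ℕ, 1 ≤ n →
      (1 / 2 : ENNReal) ≤
        ℙ {a | (n : ℝ) * sigmaEnergy c n a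
            ≤ 2 * (4 * (1 - cst)⁻¹ * ∑' j : ℕ, cst ^ j * (j : ℝ) ^ 2)}) ∧
    (4 * (4 * (1 - cst)⁻¹ * ∑' j : ℕ, cst ^ j * (j : ℝ) ^ 2))⁻¹
      ≤ sInf {x : ℝ | ∃ n : ℕ, 1 ≤ n ∧ x = (n : ℝ)⁻¹ * ∫ a, R n a ∂ℙ} := by
  have hsum : Summable (fun j : ℕ => cst ^ j * (j : ℝ) ^ 2) := by
    have := summable_pow_mul_geometric_of_norm_lt_one 2
      (show ‖cst‖ < 1 by rw [Real.norm_eq_abs, abs_of_pos h0]; exact h1)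
    exact this.congr (fun j => by ring)
  set S : ℝ := ∑' j : ℕ, cst ^ j * (j : ℝ) ^ 2 with hS_def
  have hS_pos : 0 < S := by
    have hle : cst ^ 1 * ((1:ℕ) : ℝ) ^ 2 ≤ S :=
      Summable.le_tsum hsum 1 (fun j _ => by positivity)
    simpa using lt_of_lt_of_le (by simpa using h0) hle
  set C₀ : ℝ := 4 * (1 - cst)⁻¹ * S with hC_def
  have hinv1 : (1:ℝ) ≤ (1 - cst)⁻¹ := by
    have := inv_anti₀ (show (0:ℝ) < 1 - cst by linarith) (show (1:ℝ) - cst ≤ 1 by linarith)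
    simpa using this
  have hC_pos : 0 < C₀ := by
    rw [hC_def]
    exact mul_pos (mul_pos (by norm_num) (by linarith)) hS_pos
  have h4S : 4 * S ≤ C₀ := by rw [hC_def]; nlinarith
  have hDmeas : ∀ n : ℕ, Measurable (dEnergy c n) := dEnergy_measurable c hm
  have hlint : ∀ n : ℕ, 1 ≤ n →
      (n : ENNReal) * ∫⁻ a, dEnergy c n a ∂ℙ ≤ ENNReal.ofReal C₀ :=
    fun n hn => le_trans (lintegral_dEnergy ℙ cst h0 h1 c hm hnn hE n hn)
      (ENNReal.ofReal_le_ofReal h4S)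
  have part1 : ∀ n : ℕ, 1 ≤ n →
      ∫⁻ a, ENNReal.ofReal ((n : ℝ) * sigmaEnergy c n a) ∂ℙ ≤ ENNReal.ofReal C₀ := by
    intro n hn
    refine le_trans ?_ (hlint n hn)
    rw [← lintegral_const_mul _ (hDmeas n)]
    refine lintegral_mono (fun a => ?_)
    rw [ENNReal.ofReal_mul (by positivity), ENNReal.ofReal_natCast]
    exact mul_le_mul_right (ofReal_sigma_le c hnn n a) _
  have hGmeas : ∀ n : ℕ,
      MeasurableSet {a : Ω | (n : ENNReal) * dEnergy c n a ≤ ENNReal.ofReal (2 * C₀)} :=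
    fun n => measurableSet_le (measurable_const.mul (hDmeas n)) measurable_const
  have hGhalf : ∀ n : ℕ, 1 ≤ n → (1/2 : ENNReal) ≤
      ℙ {a : Ω | (n : ENNReal) * dEnergy c n a ≤ ENNReal.ofReal (2 * C₀)} := by
    intro n hn
    set G := {a : Ω | (n : ENNReal) * dEnergy c n a ≤ ENNReal.ofReal (2 * C₀)} with hG_def
    have hofC_ne0 : ENNReal.ofReal (2 * C₀) ≠ 0 := by
      simp only [ne_eq, ENNReal.ofReal_eq_zero, not_le]; linarith
    have hcompl : ℙ Gᶜ ≤ 1/2 := by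
      have hsub : Gᶜ ⊆ {a : Ω | ENNReal.ofReal (2 * C₀) ≤ (n : ENNReal) * dEnergy c n a} :=
        fun a ha => by simp only [Set.mem_setOf_eq]; exact le_of_lt (lt_of_not_ge ha)
      refine le_trans (measure_mono hsub) ?_
      refine le_trans (meas_ge_le_lintegral_div
        ((measurable_const.mul (hDmeas n)).aemeasurable) hofC_ne0 ENNReal.ofReal_ne_top) ?_
      have hi : ∫⁻ a, (n : ENNReal) * dEnergy c n a ∂ℙ ≤ ENNReal.ofReal C₀ := by
        rw [lintegral_const_mul _ (hDmeas n)]; exact hlint n hn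
      refine le_trans (ENNReal.div_le_div_right hi _) ?_
      rw [ENNReal.ofReal_mul (by norm_num : (0:ℝ) ≤ 2), show ENNReal.ofReal 2 = 2 by norm_num]
      rw [show ENNReal.ofReal C₀ / (2 * ENNReal.ofReal C₀)
          = 1 * ENNReal.ofReal C₀ / (2 * ENNReal.ofReal C₀) by rw [one_mul]]
      rw [ENNReal.mul_div_mul_right 1 2 (by
        simp only [ne_eq, ENNReal.ofReal_eq_zero, not_le]; linarith) ENNReal.ofReal_ne_top]
    have hadd := measure_add_measure_compl (μ := ℙ) (hGmeas n)
    have h1' : (1 : ENNReal) ≤ ℙ G + 1/2 :=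
      calc (1 : ENNReal) = ℙ G + ℙ Gᶜ := by rw [hadd, measure_univ]
        _ ≤ ℙ G + 1/2 := add_le_add le_rfl hcompl
    calc (1/2 : ENNReal) = 1 - 1/2 := by norm_num
      _ ≤ ℙ G := tsub_le_iff_right.mpr h1'
  have hGsub : ∀ n : ℕ, 1 ≤ n →
      {a : Ω | (n : ENNReal) * dEnergy c n a ≤ ENNReal.ofReal (2 * C₀)}
        ⊆ {a : Ω | (n : ℝ) * sigmaEnergy c n a ≤ 2 * C₀} := by
    intro n hn a ha
    simp only [Set.mem_setOf_eq] at ha ⊢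
    have hfin : dEnergy c n a ≠ ⊤ := by
      intro htop
      rw [htop, ENNReal.mul_top (by exact_mod_cast Nat.one_le_iff_ne_zero.mp hn : (n : ENNReal) ≠ 0)] at ha
      exact ENNReal.ofReal_ne_top (top_le_iff.mp ha)
    rw [sigma_eq_toReal c hnn n a hfin]
    have h' := ENNReal.toReal_mono ENNReal.ofReal_ne_top ha
    rw [ENNReal.toReal_mul, ENNReal.toReal_ofReal (by linarith : (0:ℝ) ≤ 2 * C₀)] at h'
    simpa using h'
  refine ⟨part1, fun n hn => le_trans (hGhalf n hn) (measure_mono (hGsub n hn)), ?_⟩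
  apply le_csInf
  · exact ⟨((1:ℕ) : ℝ)⁻¹ * ∫ a, R 1 a ∂ℙ, 1, le_rfl, rfl⟩
  · rintro x ⟨n, hn, rfl⟩
    have hn' : (0:ℝ) < n := by exact_mod_cast hn
    set G := {a : Ω | (n : ENNReal) * dEnergy c n a ≤ ENNReal.ofReal (2 * C₀)} with hG_def
    have hbound : ∀ a ∈ G, (n : ℝ) / (2 * C₀) ≤ R n a := by
      intro a ha
      have hub : (n : ℝ) * sigmaEnergy c n a ≤ 2 * C₀ := hGsub n hn ha
      have hfin : dEnergy c n a ≠ ⊤ := by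
        intro htop
        have ha' : (n : ENNReal) * dEnergy c n a ≤ ENNReal.ofReal (2 * C₀) := ha
        rw [htop, ENNReal.mul_top (by exact_mod_cast Nat.one_le_iff_ne_zero.mp hn : (n : ENNReal) ≠ 0)] at ha'
        exact ENNReal.ofReal_ne_top (top_le_iff.mp ha')
      have hpos : 0 < sigmaEnergy c n a := by
        rw [sigma_eq_toReal c hnn n a hfin]
        have hterm : ENNReal.ofReal (c 0 1 a * (linTest n 0 - linTest n 1) ^ 2)
            ≤ dEnergy c n a := by
          refine le_trans (ENNReal.le_tsum (1 : ℤ)) (ENNReal.le_tsum (0 : ℤ))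
        have hlt1 : 0 < linTest n 1 := by
          unfold linTest
          have h1n : (0:ℝ) < ((1:ℤ):ℝ) / (n:ℝ) := by positivity
          exact lt_min (lt_of_lt_of_le h1n (le_max_left _ _)) one_pos
        have h01 : 0 < c 0 1 a * (linTest n 0 - linTest n 1) ^ 2 := by
          have hc01 : 0 < c 0 1 a := by simpa using hcpos 0 a
          have : linTest n 0 = 0 := linTest_of_nonpos le_rfl
          apply mul_pos hc01
          rw [this, zero_sub, neg_sq]
          exact pow_pos hlt1 2
        calc (0:ℝ) < c 0 1 a * (linTest n 0 - linTest n 1) ^ 2 := h01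
          _ = (ENNReal.ofReal (c 0 1 a * (linTest n 0 - linTest n 1) ^ 2)).toReal :=
              (ENNReal.toReal_ofReal (le_of_lt h01)).symm
          _ ≤ (dEnergy c n a).toReal := ENNReal.toReal_mono hfin hterm
      have hle : sigmaEnergy c n a ≤ 2 * C₀ / n := by
        rw [le_div_iff₀ hn']; linarith [hub]
      have hinv := inv_anti₀ hpos hle
      rw [inv_div] at hinv
      exact le_trans hinv (hR n a)
    have hind : ∀ a, G.indicator (fun _ => (n : ℝ) / (2 * C₀)) a ≤ R n a := by
      intro a; by_cases hga : a ∈ G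
      · rw [Set.indicator_of_mem hga]; exact hbound a hga
      · rw [Set.indicator_of_notMem hga]; exact hRnn n a
    have hint_ind : Integrable (G.indicator (fun _ => (n : ℝ) / (2 * C₀))) ℙ :=
      (integrable_const _).indicator (hGmeas n)
    have hInt := integral_mono hint_ind (hRint n) hind
    rw [integral_indicator_const _ (hGmeas n)] at hInt
    have htor : (1/2 : ℝ) ≤ (ℙ G).toReal := by
      have h' := ENNReal.toReal_mono (measure_ne_top ℙ G) (hGhalf n hn)
      simpa using h'
    have hfinal : (1/2 : ℝ) * ((n : ℝ) / (2 * C₀)) ≤ ∫ a, R n a ∂ℙ := by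
      rw [smul_eq_mul] at hInt
      refine le_trans (mul_le_mul_of_nonneg_right htor (by positivity)) hInt
    calc (4 * C₀)⁻¹ = (n : ℝ)⁻¹ * ((1/2 : ℝ) * ((n : ℝ) / (2 * C₀))) := by
          field_simp; ring
      _ ≤ (n : ℝ)⁻¹ * ∫ a, R n a ∂ℙ :=
          mul_le_mul_of_nonneg_left hfinal (by positivity)
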